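/- Let L be a nonzero lattice (a finitely generated free abelian group with L ≠ {0}), let L₀ ⊆ L be a subgroup of finite index, and let l₀ ∈ L. Then for every prime p that is coprime to the index [L : L₀], the coset L' = l₀ + L₀ contains an element l whose divisibility div(l) in L is divisible by p (in particular an element of pL); consequently p ≤ sup div(L'). -/
import Mathlib


/-- The divisibility of an element `x` of a lattice (finitely generated free abelian
group) `L`: the largest natural number `d` such that `x = d • x₀` for some `x₀ ∈ L`
(and `0` for `x = 0`, since then the set of such `d` is unbounded and `sSup` gives `0`). -/
noncomputable def divis {L : Type*} [AddCommGroup L] (x : L) : ℕ :=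
  sSup {d : ℕ | ∃ y : L, x = d • y}

lemma bddAbove_divset {L : Type*} [AddCommGroup L] [Module.Free ℤ L]
    [Module.Finite ℤ L] {x : L} (hx : x ≠ 0) :
    BddAbove {d : ℕ | ∃ y : L, x = d • y} := by
  classical
  let b := Module.Free.chooseBasis ℤ L
  have hrepr : b.repr x ≠ 0 := fun h => hx (by simpa using b.repr.injective (by simpa using h))
  obtain ⟨i, hi⟩ := Finsupp.ne_iff.mp hrepr
  simp only [Finsupp.coe_zero, Pi.zero_apply] at hi
  refine ⟨(b.repr x i).natAbs, fun d hd => ?_⟩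
  obtain ⟨y, hy⟩ := hd
  have hdvd : (d : ℤ) ∣ b.repr x i := ⟨b.repr y i, by rw [hy]; simp⟩
  have := Int.natAbs_dvd_natAbs.mpr hdvd
  simp only [Int.natAbs_natCast] at this
  exact Nat.le_of_dvd (Int.natAbs_pos.mpr hi) this

lemma divis_key {L : Type*} [AddCommGroup L] [Module.Free ℤ L]
    [Module.Finite ℤ L] {x : L} (hx : x ≠ 0) {p : ℕ} (hp : p.Prime)
    {m : L} (hm : x = p • m) : p ∣ divis x ∧ p ≤ divis x := by
  have hSb := bddAbove_divset hx
  have hpS : p ∈ {d : ℕ | ∃ y : L, x = d • y} := ⟨m, hm⟩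
  have hple : p ≤ divis x := le_csSup hSb hpS
  have hdS : divis x ∈ {d : ℕ | ∃ y : L, x = d • y} :=
    Nat.sSup_mem ⟨p, hpS⟩ hSb
  obtain ⟨y, hy⟩ := hdS
  set d := divis x with hd
  refine ⟨?_, hple⟩
  by_contra hnd
  have hcop : IsCoprime (p : ℤ) (d : ℤ) := by
    rw [Int.isCoprime_iff_gcd_eq_one, Int.gcd_natCast_natCast]
    exact hp.coprime_iff_not_dvd.mpr hnd
  obtain ⟨a, b, hab⟩ := hcop
  have h1 : x = (d : ℤ) • y := by rw [hy, natCast_zsmul]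
  have h2 : x = (p : ℤ) • m := by rw [hm, natCast_zsmul]
  have hab' : (a * p + b * d) • x = x := by rw [hab, one_smul]
  have key : x = ((p : ℤ) * d) • (a • y + b • m) := by
    linear_combination (norm := module) (a * (p : ℤ)) • h1 + (b * (d : ℤ)) • h2 - hab'
  have hmemS : p * d ∈ {e : ℕ | ∃ y : L, x = e • y} := by
    refine ⟨a • y + b • m, ?_⟩
    rw [key, ← natCast_zsmul]
    push_cast
    ring_nf
  have hle : p * d ≤ d := le_csSup hSb hmemS
  have hp2 := hp.two_le
  nlinarith

/-- Let `L ≠ {0}` be a nonzero lattice, `L₀ ⊆ L` a subgroup of finite index and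
`l₀ ∈ L`.  For every prime `p` coprime to the index `[L : L₀]`, the coset
`L' = l₀ + L₀` contains an element `l ∈ pL` whose divisibility is divisible by `p`;
consequently `p ≤ sup div(L')`: the coset contains an element `l` with `p ≤ div l`. -/
theorem exists_coset_elem_divis_dvd {L : Type*}
    [AddCommGroup L] [Module.Free ℤ L] [Module.Finite ℤ L] [Nontrivial L]
    (L₀ : AddSubgroup L) (hfull : L₀.index ≠ 0) (l₀ : L)
    (p : ℕ) (hp : p.Prime) (hcop : Nat.Coprime p L₀.index) :
    (∃ l : L, l - l₀ ∈ L₀ ∧ (∃ m : L, l = p • m) ∧ p ∣ divis l) ∧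
    (∃ l : L, l - l₀ ∈ L₀ ∧ p ≤ divis l) := by
  -- Bezout for p and the index
  have hcopZ : IsCoprime (p : ℤ) (L₀.index : ℤ) := by
    rw [Int.isCoprime_iff_gcd_eq_one, Int.gcd_natCast_natCast]
    exact hcop
  obtain ⟨a, b, hab⟩ := hcopZ
  -- first candidate
  set l1 : L := (a * p) • l₀ with hl1
  have hl1mem : l1 - l₀ ∈ L₀ := by
    have : l1 - l₀ = (-b) • ((L₀.index : ℕ) • l₀) := by
      rw [hl1, ← natCast_zsmul, smul_smul]
      have h' : (a * (p : ℤ)) • l₀ - l₀ = (a * p - 1) • l₀ := by rw [sub_smul, one_smul]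
      rw [h']
      congr 1
      linarith [hab]
    rw [this]
    exact AddSubgroup.zsmul_mem _ (AddSubgroup.nsmul_index_mem L₀ l₀) _
  have hl1p : l1 = p • (a • l₀) := by
    rw [hl1, mul_comm, mul_smul, natCast_zsmul]
  -- adjust to get a nonzero element
  obtain ⟨x₀, hx₀⟩ := exists_ne (0 : L)
  have hc0 : (p * L₀.index : ℤ) ≠ 0 := by
    have := hp.pos
    positivity
  have hcx : (p * L₀.index : ℕ) • x₀ ≠ 0 := by
    intro h
    apply hx₀
    have : ((p * L₀.index : ℕ) : ℤ) • x₀ = 0 := by rwa [natCast_zsmul]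
    rcases smul_eq_zero.mp this with h' | h'
    · exact absurd h' (by exact_mod_cast hc0)
    · exact h'
  obtain ⟨l, hlmem, m, hlp, hlne⟩ :
      ∃ l : L, l - l₀ ∈ L₀ ∧ ∃ m : L, l = p • m ∧ l ≠ 0 := by
    by_cases h : l1 = 0
    · refine ⟨l1 + (p * L₀.index : ℕ) • x₀, ?_, a • l₀ + L₀.index • x₀, ?_, ?_⟩
      · have hmem2 : (p * L₀.index : ℕ) • x₀ ∈ L₀ := by
          rw [mul_smul]
          exact AddSubgroup.nsmul_mem _ (AddSubgroup.nsmul_index_mem L₀ x₀) _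
        have : l1 + (p * L₀.index : ℕ) • x₀ - l₀ = (l1 - l₀) + (p * L₀.index : ℕ) • x₀ := by
          abel
        rw [this]
        exact AddSubgroup.add_mem _ hl1mem hmem2
      · rw [hl1p, smul_add, mul_smul]
      · rw [h, zero_add]; exact hcx
    · exact ⟨l1, hl1mem, a • l₀, hl1p, h⟩
  obtain ⟨hdvd, hle⟩ := divis_key hlne hp hlp
  exact ⟨⟨l, hlmem, ⟨m, hlp⟩, hdvd⟩, ⟨l, hlmem, hle⟩⟩
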